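/- Let a two-player zero-sum POSG with finite horizon H be given and let 0 ≤ τ ≤ H−1. Set V^max_τ = ((1−γ^{H−τ})/(1−γ)) · max_{s,a¹,a²} r(s,a¹,a²), V^min_τ = ((1−γ^{H−τ})/(1−γ)) · min_{s,a¹,a²} r(s,a¹,a²), and λ_{H−τ} = (V^max_τ − V^min_τ)/2. Then the optimal value function V*_τ is λ_{H−τ}-Lipschitz on the occupancy simplex with respect to the ℓ¹-norm: |V*_τ(o) − V*_τ(o')| ≤ λ_{H−τ} ‖o − o'‖₁ for all occupancy states o, o' at time τ. -/

import Mathlib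

open scoped BigOperators

/-- A two-player zero-sum partially observable stochastic game. -/
structure POSG where
  S : Type
  A1 : Type
  A2 : Type
  Z1 : Type
  Z2 : Type
  [fintS : Fintype S]
  [fintA1 : Fintype A1]
  [fintA2 : Fintype A2]
  [fintZ1 : Fintype Z1]
  [fintZ2 : Fintype Z2]
  [neS : Nonempty S]
  [neA1 : Nonempty A1]
  [neA2 : Nonempty A2]
  [neZ1 : Nonempty Z1]
  [neZ2 : Nonempty Z2]
  P : S → A1 → A2 → S × Z1 × Z2 → ℝ
  P_nonneg : ∀ s a1 a2 x, 0 ≤ P s a1 a2 x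
  P_sum_one : ∀ s a1 a2, ∑ x, P s a1 a2 x = 1
  r : S → A1 → A2 → ℝ
  H : ℕ
  γ : ℝ
  γ_nonneg : 0 ≤ γ
  γ_lt_one : γ < 1

attribute [instance] POSG.fintS POSG.fintA1 POSG.fintA2 POSG.fintZ1 POSG.fintZ2
  POSG.neS POSG.neA1 POSG.neA2 POSG.neZ1 POSG.neZ2

/-- A length-`t` private history: a sequence of action-observation pairs. -/
abbrev Hist (A Z : Type) (t : ℕ) : Type := Fin t → A × Z

/-- A vector indexed by state–joint-history triples (the ambient space of occupancy states). -/
abbrev OccVec (G : POSG) (t : ℕ) : Type := G.S × Hist G.A1 G.Z1 t × Hist G.A2 G.Z2 t → ℝ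

/-- `o` is an occupancy state (a probability distribution). -/
def IsOcc (G : POSG) (t : ℕ) (o : OccVec G t) : Prop :=
  (∀ x, 0 ≤ o x) ∧ ∑ x, o x = 1

/-- A vector indexed by history–action pairs (the ambient space of behavioral decision rules). -/
abbrev DRVec (A Z : Type) (t : ℕ) : Type := Hist A Z t → A → ℝ

/-- `β` is a behavioral decision rule. -/
def IsDR {A Z : Type} [Fintype A] (t : ℕ) (β : DRVec A Z t) : Prop :=
  (∀ θ a, 0 ≤ β θ a) ∧ ∀ θ, ∑ a, β θ a = 1

/-- The occupancy-state transition `T(o, β¹, β²)`. -/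
noncomputable def Tr (G : POSG) (t : ℕ) (o : OccVec G t)
    (β1 : DRVec G.A1 G.Z1 t) (β2 : DRVec G.A2 G.Z2 t) : OccVec G (t + 1) :=
  fun x =>
    β1 (Fin.init x.2.1) (x.2.1 (Fin.last t)).1 * β2 (Fin.init x.2.2) (x.2.2 (Fin.last t)).1 *
      ∑ s, G.P s (x.2.1 (Fin.last t)).1 (x.2.2 (Fin.last t)).1
          (x.1, (x.2.1 (Fin.last t)).2, (x.2.2 (Fin.last t)).2) *
        o (s, Fin.init x.2.1, Fin.init x.2.2)

/-- The expected immediate reward `r(o, β¹, β²)`. -/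
noncomputable def Rew (G : POSG) (t : ℕ) (o : OccVec G t)
    (β1 : DRVec G.A1 G.Z1 t) (β2 : DRVec G.A2 G.Z2 t) : ℝ :=
  ∑ x : G.S × Hist G.A1 G.Z1 t × Hist G.A2 G.Z2 t, ∑ a1 : G.A1, ∑ a2 : G.A2,
    o x * β1 x.2.1 a1 * β2 x.2.2 a2 * G.r x.1 a1 a2

/-- A behavioral strategy: a decision rule for each time step. -/
abbrev Strat (A Z : Type) : Type := ∀ t : ℕ, DRVec A Z t

def IsStrat {A Z : Type} [Fintype A] (β : Strat A Z) : Prop := ∀ t, IsDR t (β t)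

/-- Value with `n` remaining steps starting at time `t`. -/
noncomputable def ValAux (G : POSG) :
    (n : ℕ) → (t : ℕ) → OccVec G t → Strat G.A1 G.Z1 → Strat G.A2 G.Z2 → ℝ
  | 0, _, _, _, _ => 0
  | n + 1, t, o, β1, β2 =>
      Rew G t o (β1 t) (β2 t) + G.γ * ValAux G n (t + 1) (Tr G t o (β1 t) (β2 t)) β1 β2

/-- The value `V_τ(o_τ, β_{τ:H−1})` (with `V_H = 0`). -/
noncomputable def Val (G : POSG) (t : ℕ) (o : OccVec G t)
    (β1 : Strat G.A1 G.Z1) (β2 : Strat G.A2 G.Z2) : ℝ :=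
  ValAux G (G.H - t) t o β1 β2

/-- The optimal (maximin) value `V*_τ(o_τ)`. -/
noncomputable def Vstar (G : POSG) (t : ℕ) (o : OccVec G t) : ℝ :=
  ⨆ β1 : {β : Strat G.A1 G.Z1 // IsStrat β},
    ⨅ β2 : {β : Strat G.A2 G.Z2 // IsStrat β}, Val G t o β1.1 β2.1

/-- The local game `Q*_τ(o_τ, β¹_τ, β²_τ)`. -/
noncomputable def Qstar (G : POSG) (t : ℕ) (o : OccVec G t)
    (β1 : DRVec G.A1 G.Z1 t) (β2 : DRVec G.A2 G.Z2 t) : ℝ :=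
  Rew G t o β1 β2 + G.γ * Vstar G (t + 1) (Tr G t o β1 β2)

/-- Maximal immediate reward. -/
noncomputable def rmax (G : POSG) : ℝ :=
  Finset.univ.sup' Finset.univ_nonempty
    (fun x : G.S × G.A1 × G.A2 => G.r x.1 x.2.1 x.2.2)

/-- Minimal immediate reward. -/
noncomputable def rmin (G : POSG) : ℝ :=
  Finset.univ.inf' Finset.univ_nonempty
    (fun x : G.S × G.A1 × G.A2 => G.r x.1 x.2.1 x.2.2)

section Aux

/-- Uniform decision rule. -/
noncomputable def uDR (A Z : Type) [Fintype A] (t : ℕ) : DRVec A Z t :=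
  fun _ _ => (Fintype.card A : ℝ)⁻¹

lemma isDR_uDR (A Z : Type) [Fintype A] [Nonempty A] (t : ℕ) : IsDR t (uDR A Z t) := by
  refine ⟨fun θ a => by simp [uDR], fun θ => ?_⟩
  simp only [uDR, Finset.sum_const, Finset.card_univ, nsmul_eq_mul]
  rw [mul_inv_cancel₀]
  exact_mod_cast Fintype.card_ne_zero

instance stratNE (A Z : Type) [Fintype A] [Nonempty A] :
    Nonempty {β : Strat A Z // IsStrat β} :=
  ⟨⟨fun t => uDR A Z t, fun t => isDR_uDR A Z t⟩⟩

/-- The index bijection used to compute the total mass of `Tr`. -/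
def bigE (G : POSG) (t : ℕ) :
    ((G.S × Hist G.A1 G.Z1 t × Hist G.A2 G.Z2 t) × (G.A1 × G.A2) × (G.S × G.Z1 × G.Z2)) ≃
    ((G.S × Hist G.A1 G.Z1 (t+1) × Hist G.A2 G.Z2 (t+1)) × G.S) where
  toFun v := ((v.2.2.1, Fin.snoc v.1.2.1 (v.2.1.1, v.2.2.2.1),
      Fin.snoc v.1.2.2 (v.2.1.2, v.2.2.2.2)), v.1.1)
  invFun w := ((w.2, Fin.init w.1.2.1, Fin.init w.1.2.2),
    ((w.1.2.1 (Fin.last t)).1, (w.1.2.2 (Fin.last t)).1),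
    (w.1.1, (w.1.2.1 (Fin.last t)).2, (w.1.2.2 (Fin.last t)).2))
  left_inv v := by simp
  right_inv w := by simp [Fin.snoc_init_self]

end Aux
section Aux2
variable (G : POSG)

lemma Tr_nonneg {t : ℕ} {o : OccVec G t} {β1 : DRVec G.A1 G.Z1 t} {β2 : DRVec G.A2 G.Z2 t}
    (ho : ∀ x, 0 ≤ o x) (h1 : IsDR t β1) (h2 : IsDR t β2) :
    ∀ y, 0 ≤ Tr G t o β1 β2 y := by
  intro y
  exact mul_nonneg (mul_nonneg (h1.1 _ _) (h2.1 _ _))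
    (Finset.sum_nonneg fun s _ => mul_nonneg (G.P_nonneg _ _ _ _) (ho _))

lemma Tr_sum {t : ℕ} {o : OccVec G t} {β1 : DRVec G.A1 G.Z1 t} {β2 : DRVec G.A2 G.Z2 t}
    (h1 : IsDR t β1) (h2 : IsDR t β2) :
    ∑ y, Tr G t o β1 β2 y = ∑ x, o x := by
  classical
  set g : (G.S × Hist G.A1 G.Z1 (t+1) × Hist G.A2 G.Z2 (t+1)) × G.S → ℝ := fun w =>
    β1 (Fin.init w.1.2.1) (w.1.2.1 (Fin.last t)).1 *
      β2 (Fin.init w.1.2.2) (w.1.2.2 (Fin.last t)).1 *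
      (G.P w.2 (w.1.2.1 (Fin.last t)).1 (w.1.2.2 (Fin.last t)).1
        (w.1.1, (w.1.2.1 (Fin.last t)).2, (w.1.2.2 (Fin.last t)).2) *
       o (w.2, Fin.init w.1.2.1, Fin.init w.1.2.2)) with hg
  have step1 : ∑ w, g w = ∑ y, Tr G t o β1 β2 y := by
    rw [Fintype.sum_prod_type]
    refine Finset.sum_congr rfl fun y _ => ?_
    simp only [Tr, Finset.mul_sum, hg]
  have step2 : ∑ w, g w = ∑ v, g (bigE G t v) :=
    (Fintype.sum_equiv (bigE G t) (fun v => g (bigE G t v)) g (fun _ => rfl)).symm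
  rw [← step1, step2]
  simp only [hg, bigE, Equiv.coe_fn_mk, Fin.init_snoc, Fin.snoc_last]
  rw [Fintype.sum_prod_type]
  refine Finset.sum_congr rfl fun x _ => ?_
  rw [Fintype.sum_prod_type]
  have inner : ∀ ab : G.A1 × G.A2,
      ∑ p : G.S × G.Z1 × G.Z2,
        β1 x.2.1 ab.1 * β2 x.2.2 ab.2 * (G.P x.1 ab.1 ab.2 p * o x)
        = β1 x.2.1 ab.1 * β2 x.2.2 ab.2 * o x := by
    intro ab
    rw [← Finset.mul_sum, ← Finset.sum_mul, G.P_sum_one, one_mul]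
  rw [Finset.sum_congr rfl fun ab _ => inner ab]
  rw [Fintype.sum_prod_type]
  simp only [← Finset.sum_mul]
  have hb : ∑ i : G.A1, ∑ j : G.A2, β1 x.2.1 i * β2 x.2.2 j = 1 := by
    simp only [← Finset.mul_sum, h2.2, mul_one, h1.2]
  rw [hb, one_mul]

end Aux2
section Aux3
variable (G : POSG)

lemma weight_sum {t : ℕ} {o : OccVec G t} {β1 : DRVec G.A1 G.Z1 t} {β2 : DRVec G.A2 G.Z2 t}
    (ho : IsOcc G t o) (h1 : IsDR t β1) (h2 : IsDR t β2) :
    ∑ x : G.S × Hist G.A1 G.Z1 t × Hist G.A2 G.Z2 t, ∑ a1 : G.A1, ∑ a2 : G.A2,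
      o x * β1 x.2.1 a1 * β2 x.2.2 a2 = 1 := by
  simp only [← Finset.mul_sum, h2.2, mul_one, h1.2]
  exact ho.2

lemma rmin_le_r (s : G.S) (a1 : G.A1) (a2 : G.A2) : rmin G ≤ G.r s a1 a2 :=
  Finset.inf'_le (fun x : G.S × G.A1 × G.A2 => G.r x.1 x.2.1 x.2.2)
    (Finset.mem_univ (s, a1, a2))

lemma r_le_rmax (s : G.S) (a1 : G.A1) (a2 : G.A2) : G.r s a1 a2 ≤ rmax G :=
  Finset.le_sup' (fun x : G.S × G.A1 × G.A2 => G.r x.1 x.2.1 x.2.2)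
    (Finset.mem_univ (s, a1, a2))

lemma Rew_bounds {t : ℕ} {o : OccVec G t} {β1 : DRVec G.A1 G.Z1 t} {β2 : DRVec G.A2 G.Z2 t}
    (ho : IsOcc G t o) (h1 : IsDR t β1) (h2 : IsDR t β2) :
    rmin G ≤ Rew G t o β1 β2 ∧ Rew G t o β1 β2 ≤ rmax G := by
  have hw : ∀ (x : G.S × Hist G.A1 G.Z1 t × Hist G.A2 G.Z2 t) (a1 : G.A1) (a2 : G.A2),
      0 ≤ o x * β1 x.2.1 a1 * β2 x.2.2 a2 :=
    fun x a1 a2 => mul_nonneg (mul_nonneg (ho.1 x) (h1.1 _ _)) (h2.1 _ _)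
  constructor
  · calc rmin G = ∑ x, ∑ a1, ∑ a2, o x * β1 x.2.1 a1 * β2 x.2.2 a2 * rmin G := by
          simp only [← Finset.sum_mul]; rw [weight_sum G ho h1 h2, one_mul]
      _ ≤ Rew G t o β1 β2 := by
          refine Finset.sum_le_sum fun x _ => Finset.sum_le_sum fun a1 _ =>
            Finset.sum_le_sum fun a2 _ => ?_
          exact mul_le_mul_of_nonneg_left (rmin_le_r G x.1 a1 a2) (hw x a1 a2)
  · calc Rew G t o β1 β2
        ≤ ∑ x, ∑ a1, ∑ a2, o x * β1 x.2.1 a1 * β2 x.2.2 a2 * rmax G := by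
          refine Finset.sum_le_sum fun x _ => Finset.sum_le_sum fun a1 _ =>
            Finset.sum_le_sum fun a2 _ => ?_
          exact mul_le_mul_of_nonneg_left (r_le_rmax G x.1 a1 a2) (hw x a1 a2)
      _ = rmax G := by simp only [← Finset.sum_mul]; rw [weight_sum G ho h1 h2, one_mul]

lemma Rew_lin {t : ℕ} (o o' : OccVec G t) (a b : ℝ) (β1 : DRVec G.A1 G.Z1 t)
    (β2 : DRVec G.A2 G.Z2 t) :
    Rew G t (fun x => a * o x + b * o' x) β1 β2
      = a * Rew G t o β1 β2 + b * Rew G t o' β1 β2 := by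
  simp only [Rew, Finset.mul_sum, ← Finset.sum_add_distrib]
  refine Finset.sum_congr rfl fun x _ => Finset.sum_congr rfl fun a1 _ =>
    Finset.sum_congr rfl fun a2 _ => ?_
  ring

lemma Tr_lin {t : ℕ} (o o' : OccVec G t) (a b : ℝ) (β1 : DRVec G.A1 G.Z1 t)
    (β2 : DRVec G.A2 G.Z2 t) :
    Tr G t (fun x => a * o x + b * o' x) β1 β2
      = fun y => a * Tr G t o β1 β2 y + b * Tr G t o' β1 β2 y := by
  funext y
  simp only [Tr, Finset.mul_sum, ← Finset.sum_add_distrib]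
  exact Finset.sum_congr rfl fun s _ => by ring

end Aux3
section Aux4
variable (G : POSG)

lemma coef_succ (n : ℕ) : (1 - G.γ ^ (n+1)) / (1 - G.γ) = 1 + G.γ * ((1 - G.γ ^ n) / (1 - G.γ)) := by
  have h : 1 - G.γ ≠ 0 := by have := G.γ_lt_one; intro h; nlinarith [h]
  field_simp
  ring

lemma isOcc_Tr {t : ℕ} {o : OccVec G t} {β1 : DRVec G.A1 G.Z1 t} {β2 : DRVec G.A2 G.Z2 t}
    (ho : IsOcc G t o) (h1 : IsDR t β1) (h2 : IsDR t β2) :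
    IsOcc G (t+1) (Tr G t o β1 β2) :=
  ⟨Tr_nonneg G ho.1 h1 h2, by rw [Tr_sum G h1 h2, ho.2]⟩

lemma ValAux_bounds (n : ℕ) : ∀ (t : ℕ) (o : OccVec G t) (β1 : Strat G.A1 G.Z1)
    (β2 : Strat G.A2 G.Z2), IsOcc G t o → IsStrat β1 → IsStrat β2 →
    (1 - G.γ ^ n) / (1 - G.γ) * rmin G ≤ ValAux G n t o β1 β2 ∧
      ValAux G n t o β1 β2 ≤ (1 - G.γ ^ n) / (1 - G.γ) * rmax G := by
  induction n with
  | zero => intro t o β1 β2 _ _ _; simp [ValAux]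
  | succ n ih =>
    intro t o β1 β2 ho hβ1 hβ2
    have hTr := isOcc_Tr G ho (hβ1 t) (hβ2 t)
    have hih := ih (t+1) (Tr G t o (β1 t) (β2 t)) β1 β2 hTr hβ1 hβ2
    have hR := Rew_bounds G ho (hβ1 t) (hβ2 t)
    have hγ := G.γ_nonneg
    have h1 := mul_le_mul_of_nonneg_left hih.1 hγ
    have h2 := mul_le_mul_of_nonneg_left hih.2 hγ
    have hc := coef_succ G n
    have hcmin : (1 - G.γ ^ (n+1)) / (1 - G.γ) * rmin G
        = rmin G + G.γ * ((1 - G.γ ^ n) / (1 - G.γ) * rmin G) := by rw [hc]; ring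
    have hcmax : (1 - G.γ ^ (n+1)) / (1 - G.γ) * rmax G
        = rmax G + G.γ * ((1 - G.γ ^ n) / (1 - G.γ) * rmax G) := by rw [hc]; ring
    constructor
    · show _ ≤ Rew G t o (β1 t) (β2 t) + G.γ * ValAux G n (t+1) _ β1 β2
      rw [hcmin]; exact add_le_add hR.1 h1
    · show Rew G t o (β1 t) (β2 t) + G.γ * ValAux G n (t+1) _ β1 β2 ≤ _
      rw [hcmax]; exact add_le_add hR.2 h2

lemma ValAux_lin (n : ℕ) : ∀ (t : ℕ) (o o' : OccVec G t) (a b : ℝ)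
    (β1 : Strat G.A1 G.Z1) (β2 : Strat G.A2 G.Z2),
    ValAux G n t (fun x => a * o x + b * o' x) β1 β2
      = a * ValAux G n t o β1 β2 + b * ValAux G n t o' β1 β2 := by
  induction n with
  | zero => intro t o o' a b β1 β2; simp [ValAux]
  | succ n ih =>
    intro t o o' a b β1 β2
    show Rew G t _ _ _ + G.γ * ValAux G n (t+1) (Tr G t _ _ _) β1 β2 = _
    rw [Rew_lin, Tr_lin, ih]
    show _ = a * (Rew G t o (β1 t) (β2 t) + G.γ * ValAux G n (t+1) _ β1 β2)
      + b * (Rew G t o' (β1 t) (β2 t) + G.γ * ValAux G n (t+1) _ β1 β2)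
    ring

end Aux4
section Aux5

lemma max_add_max_neg (a : ℝ) : max a 0 + max (-a) 0 = |a| := by
  rcases le_total a 0 with h | h
  · rw [max_eq_right h, max_eq_left (by linarith), abs_of_nonpos h, zero_add]
  · rw [max_eq_left h, max_eq_right (by linarith), abs_of_nonneg h, add_zero]

lemma max_sub_max_neg (a : ℝ) : max a 0 - max (-a) 0 = a := by
  rcases le_total a 0 with h | h
  · rw [max_eq_right h, max_eq_left (by linarith)]; ring
  · rw [max_eq_left h, max_eq_right (by linarith)]; ring

lemma ValAux_diff (G : POSG) (n t : ℕ) (o o' : OccVec G t)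
    (ho : IsOcc G t o) (ho' : IsOcc G t o')
    (β1 : Strat G.A1 G.Z1) (β2 : Strat G.A2 G.Z2) (hβ1 : IsStrat β1) (hβ2 : IsStrat β2) :
    |ValAux G n t o β1 β2 - ValAux G n t o' β1 β2| ≤
      (((1 - G.γ ^ n) / (1 - G.γ) * rmax G - (1 - G.γ ^ n) / (1 - G.γ) * rmin G) / 2) *
        ∑ x, |o x - o' x| := by
  classical
  set N := ∑ x, |o x - o' x| with hNdef
  set M := N / 2 with hMdef
  have hd0 : ∑ x, (o x - o' x) = 0 := by
    rw [Finset.sum_sub_distrib, ho.2, ho'.2]; ring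
  have hsumsplit : ∑ x, max (o x - o' x) 0 + ∑ x, max (-(o x - o' x)) 0 = N := by
    rw [← Finset.sum_add_distrib, hNdef]
    exact Finset.sum_congr rfl fun x _ => max_add_max_neg _
  have hsumsub : ∑ x, max (o x - o' x) 0 - ∑ x, max (-(o x - o' x)) 0 = 0 := by
    rw [← Finset.sum_sub_distrib]
    rw [Finset.sum_congr rfl fun x _ => max_sub_max_neg (o x - o' x)]
    exact hd0
  have hsum1 : ∑ x, max (o x - o' x) 0 = M := by rw [hMdef]; linarith
  have hsum2 : ∑ x, max (-(o x - o' x)) 0 = M := by rw [hMdef]; linarith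
  have hN0 : 0 ≤ N := Finset.sum_nonneg fun x _ => abs_nonneg _
  by_cases hN : N = 0
  · have hoo : o = o' := by
      funext x
      have hx := (Finset.sum_eq_zero_iff_of_nonneg
        (fun x _ => abs_nonneg (o x - o' x))).1 hN x (Finset.mem_univ x)
      have := abs_eq_zero.1 hx
      linarith
    rw [hoo, hN]
    simp
  · have hM : 0 < M := by
      have : 0 < N := lt_of_le_of_ne hN0 (Ne.symm hN)
      rw [hMdef]; linarith
    set p : OccVec G t := fun x => max (o x - o' x) 0 / M with hpdef
    set q : OccVec G t := fun x => max (-(o x - o' x)) 0 / M with hqdef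
    have hp : IsOcc G t p :=
      ⟨fun x => div_nonneg (le_max_right _ _) hM.le,
        by rw [hpdef]; simp only [← Finset.sum_div]; rw [hsum1, div_self hM.ne']⟩
    have hq : IsOcc G t q :=
      ⟨fun x => div_nonneg (le_max_right _ _) hM.le,
        by rw [hqdef]; simp only [← Finset.sum_div]; rw [hsum2, div_self hM.ne']⟩
    have e0 : o = fun x => 1 * (fun y => 1 * o' y + -M * q y) x + M * p x := by
      funext x
      have e1 : M * p x = max (o x - o' x) 0 := by
        rw [hpdef]; field_simp
      have e2 : M * q x = max (-(o x - o' x)) 0 := by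
        rw [hqdef]; field_simp
      have e3 := max_sub_max_neg (o x - o' x)
      simp only []
      nlinarith [e1, e2, e3]
    have l1 := ValAux_lin G n t (fun y => 1 * o' y + -M * q y) p 1 M β1 β2
    have l2 := ValAux_lin G n t o' q 1 (-M) β1 β2
    have heq : ValAux G n t o β1 β2 - ValAux G n t o' β1 β2
        = M * (ValAux G n t p β1 β2 - ValAux G n t q β1 β2) := by
      rw [e0, l1, l2]; ring
    have hbp := ValAux_bounds G n t p β1 β2 hp hβ1 hβ2
    have hbq := ValAux_bounds G n t q β1 β2 hq hβ1 hβ2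
    have habs : |ValAux G n t p β1 β2 - ValAux G n t q β1 β2| ≤
        (1 - G.γ ^ n) / (1 - G.γ) * rmax G - (1 - G.γ ^ n) / (1 - G.γ) * rmin G :=
      abs_sub_le_iff.2 ⟨by linarith [hbp.2, hbq.1], by linarith [hbq.2, hbp.1]⟩
    rw [heq, abs_mul, abs_of_nonneg hM.le]
    calc M * |ValAux G n t p β1 β2 - ValAux G n t q β1 β2|
        ≤ M * ((1 - G.γ ^ n) / (1 - G.γ) * rmax G - (1 - G.γ ^ n) / (1 - G.γ) * rmin G) :=
          mul_le_mul_of_nonneg_left habs hM.le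
      _ = (((1 - G.γ ^ n) / (1 - G.γ) * rmax G - (1 - G.γ ^ n) / (1 - G.γ) * rmin G) / 2) * N := by
          rw [hMdef]; ring

end Aux5
/-- with `V^max_τ = ((1−γ^{H−τ})/(1−γ))·max r`,
`V^min_τ = ((1−γ^{H−τ})/(1−γ))·min r` and `λ_{H−τ} = (V^max_τ − V^min_τ)/2`, the optimal
value function `V*_τ` is `λ_{H−τ}`-Lipschitz on the occupancy simplex w.r.t. the ℓ¹-norm. -/
theorem optimal_value_lipschitz (G : POSG) (τ : ℕ) (hτ : τ < G.H)
    (o o' : OccVec G τ) (ho : IsOcc G τ o) (ho' : IsOcc G τ o') :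
    |Vstar G τ o - Vstar G τ o'| ≤
      (((1 - G.γ ^ (G.H - τ)) / (1 - G.γ) * rmax G
          - (1 - G.γ ^ (G.H - τ)) / (1 - G.γ) * rmin G) / 2) * ∑ x, |o x - o' x| := by
  classical
  set n := G.H - τ with hn
  set ε := (((1 - G.γ ^ n) / (1 - G.γ) * rmax G
      - (1 - G.γ ^ n) / (1 - G.γ) * rmin G) / 2) * ∑ x, |o x - o' x| with hε
  set Vmin := (1 - G.γ ^ n) / (1 - G.γ) * rmin G with hVmin
  set Vmax := (1 - G.γ ^ n) / (1 - G.γ) * rmax G with hVmax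
  have hval : ∀ (oo : OccVec G τ) (β1 : Strat G.A1 G.Z1) (β2 : Strat G.A2 G.Z2),
      Val G τ oo β1 β2 = ValAux G n τ oo β1 β2 := fun _ _ _ => rfl
  -- uniform bounds on Val
  have hbd : ∀ (oo : OccVec G τ), IsOcc G τ oo →
      ∀ (β1 : {β : Strat G.A1 G.Z1 // IsStrat β}) (β2 : {β : Strat G.A2 G.Z2 // IsStrat β}),
      Vmin ≤ Val G τ oo β1.1 β2.1 ∧ Val G τ oo β1.1 β2.1 ≤ Vmax := by
    intro oo hoo β1 β2
    exact ValAux_bounds G n τ oo β1.1 β2.1 hoo β1.2 β2.2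
  have hdiff : ∀ (β1 : {β : Strat G.A1 G.Z1 // IsStrat β})
      (β2 : {β : Strat G.A2 G.Z2 // IsStrat β}),
      |Val G τ o β1.1 β2.1 - Val G τ o' β1.1 β2.1| ≤ ε := by
    intro β1 β2
    exact ValAux_diff G n τ o o' ho ho' β1.1 β2.1 β1.2 β2.2
  -- infima helpers
  have hbdd : ∀ (oo : OccVec G τ), IsOcc G τ oo →
      ∀ (β1 : {β : Strat G.A1 G.Z1 // IsStrat β}),
      BddBelow (Set.range fun β2 : {β : Strat G.A2 G.Z2 // IsStrat β} =>
        Val G τ oo β1.1 β2.1) := by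
    intro oo hoo β1
    exact ⟨Vmin, by rintro x ⟨β2, rfl⟩; exact (hbd oo hoo β1 β2).1⟩
  have hF : ∀ (o1 o2 : OccVec G τ), IsOcc G τ o1 → IsOcc G τ o2 →
      (∀ (β1 : {β : Strat G.A1 G.Z1 // IsStrat β}) (β2 : {β : Strat G.A2 G.Z2 // IsStrat β}), |Val G τ o1 β1.1 β2.1 - Val G τ o2 β1.1 β2.1| ≤ ε) →
      ∀ β1 : {β : Strat G.A1 G.Z1 // IsStrat β},
      (⨅ β2 : {β : Strat G.A2 G.Z2 // IsStrat β}, Val G τ o1 β1.1 β2.1) ≤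
        (⨅ β2 : {β : Strat G.A2 G.Z2 // IsStrat β}, Val G τ o2 β1.1 β2.1) + ε := by
    intro o1 o2 h1 h2 hd β1
    have key : ∀ β2 : {β : Strat G.A2 G.Z2 // IsStrat β},
        (⨅ β2 : {β : Strat G.A2 G.Z2 // IsStrat β}, Val G τ o1 β1.1 β2.1) - ε ≤
          Val G τ o2 β1.1 β2.1 := by
      intro β2
      have ha := ciInf_le (hbdd o1 h1 β1) β2
      have hb := (abs_sub_le_iff.1 (hd β1 β2)).1
      linarith
    linarith [le_ciInf key]
  -- suprema helpers
  have hFub : ∀ (oo : OccVec G τ), IsOcc G τ oo →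
      ∀ β1 : {β : Strat G.A1 G.Z1 // IsStrat β},
      (⨅ β2 : {β : Strat G.A2 G.Z2 // IsStrat β}, Val G τ oo β1.1 β2.1) ≤ Vmax := by
    intro oo hoo β1
    obtain ⟨β2⟩ := stratNE G.A2 G.Z2
    exact le_trans (ciInf_le (hbdd oo hoo β1) β2) (hbd oo hoo β1 β2).2
  have hbddA : ∀ (oo : OccVec G τ), IsOcc G τ oo →
      BddAbove (Set.range fun β1 : {β : Strat G.A1 G.Z1 // IsStrat β} =>
        ⨅ β2 : {β : Strat G.A2 G.Z2 // IsStrat β}, Val G τ oo β1.1 β2.1) := by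
    intro oo hoo
    exact ⟨Vmax, by rintro x ⟨β1, rfl⟩; exact hFub oo hoo β1⟩
  have hsup : ∀ (o1 o2 : OccVec G τ), IsOcc G τ o1 → IsOcc G τ o2 →
      (∀ (β1 : {β : Strat G.A1 G.Z1 // IsStrat β}) (β2 : {β : Strat G.A2 G.Z2 // IsStrat β}), |Val G τ o1 β1.1 β2.1 - Val G τ o2 β1.1 β2.1| ≤ ε) →
      Vstar G τ o1 ≤ Vstar G τ o2 + ε := by
    intro o1 o2 h1 h2 hd
    refine ciSup_le fun β1 => ?_
    have step := hF o1 o2 h1 h2 hd β1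
    have step2 := le_ciSup (hbddA o2 h2) β1
    calc (⨅ β2 : {β : Strat G.A2 G.Z2 // IsStrat β}, Val G τ o1 β1.1 β2.1)
        ≤ (⨅ β2 : {β : Strat G.A2 G.Z2 // IsStrat β}, Val G τ o2 β1.1 β2.1) + ε := step
      _ ≤ Vstar G τ o2 + ε := by exact add_le_add_left step2 ε
  have hdiff' : ∀ (β1 : {β : Strat G.A1 G.Z1 // IsStrat β}) (β2 : {β : Strat G.A2 G.Z2 // IsStrat β}), |Val G τ o' β1.1 β2.1 - Val G τ o β1.1 β2.1| ≤ ε := by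
    intro β1 β2; rw [abs_sub_comm]; exact hdiff β1 β2
  have h1 := hsup o o' ho ho' hdiff
  have h2 := hsup o' o ho' ho hdiff'
  exact abs_sub_le_iff.2 ⟨by linarith, by linarith⟩
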